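/- Let 0 < ε < 1. Let f^{(0)} = 0 and let f^{(0)}, f^{(1)}, …, f^{(m)} be vectors of nonnegative integers in ℕ^n with f^{(t)}_i nondecreasing in t for every fixed i (an insertion-only stream). Then every ε-flip chain in the sequence (‖f^{(0)}‖_0, ‖f^{(1)}‖_0, …, ‖f^{(m)}‖_0), where ‖x‖_0 is the number of nonzero coordinates of x, has length at most 2 + ln(n)/ε. -/

import Mathlib

/-- Corollary 3.5, the `F₀` case: on an insertion-only stream of vectors of nonnegative
integers, every `ε`-flip chain in the sequence `t ↦ ‖f^{(t)}‖₀` (number of nonzero coordinates)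
has length at most `2 + ln n / ε`. -/
theorem stmt_4 (n m : ℕ) (ε : ℝ) (f : ℕ → Fin n → ℕ)
    (hε0 : 0 < ε) (hε1 : ε < 1)
    (hf0 : f 0 = 0)
    (hfmono : ∀ s t, s ≤ t → t ≤ m → ∀ i, f s i ≤ f t i) :
    ∀ l : List ℕ, l.Chain' (· < ·) → (∀ x ∈ l, x ≤ m) →
      l.Chain' (fun a b =>
        ¬((1 - ε) * ((Finset.univ.filter (fun i => f b i ≠ 0)).card : ℝ) ≤
            ((Finset.univ.filter (fun i => f a i ≠ 0)).card : ℝ) ∧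
          ((Finset.univ.filter (fun i => f a i ≠ 0)).card : ℝ) ≤
            (1 + ε) * ((Finset.univ.filter (fun i => f b i ≠ 0)).card : ℝ))) →
      (l.length : ℝ) ≤ 2 + Real.log n / ε := by
  intro l hlt hle hchain
  have hlog : (0:ℝ) ≤ Real.log n := Real.log_natCast_nonneg n
  have hdiv : (0:ℝ) ≤ Real.log n / ε := div_nonneg hlog hε0.le
  by_cases hlen : l.length ≤ 2
  · calc (l.length : ℝ) ≤ 2 := by exact_mod_cast hlen
      _ ≤ 2 + Real.log n / ε := by linarith
  push_neg at hlen
  set g : ℕ → ℝ := fun t => ((Finset.univ.filter (fun i => f t i ≠ 0)).card : ℝ) with hg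
  have hgnonneg : ∀ t, 0 ≤ g t := fun t => Nat.cast_nonneg _
  have hgle : ∀ t, g t ≤ n := by
    intro t
    have h : (Finset.univ.filter (fun i => f t i ≠ 0)).card ≤ n := by
      simpa using Finset.card_filter_le Finset.univ (fun i => f t i ≠ 0)
    simp only [hg]
    exact_mod_cast h
  have hgmono : ∀ s t, s ≤ t → t ≤ m → g s ≤ g t := by
    intro s t hst htm
    have : (Finset.univ.filter (fun i => f s i ≠ 0)) ⊆
        (Finset.univ.filter (fun i => f t i ≠ 0)) := by
      intro i hi
      simp only [Finset.mem_filter, Finset.mem_univ, true_and] at hi ⊢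
      intro h0
      have := hfmono s t hst htm i
      omega
    have h := Finset.card_le_card this
    simp only [hg]
    exact_mod_cast h
  rw [List.Chain', List.isChain_iff_getElem] at hlt hchain
  -- consecutive step inequality
  have hstep : ∀ (i : ℕ) (h : i < l.length - 1),
      g (l.get ⟨i, by omega⟩) < (1 - ε) * g (l.get ⟨i+1, by omega⟩) := by
    intro i h
    have hab := hlt i (by omega)
    have hc := hchain i (by omega)
    have hbm : l.get ⟨i+1, by omega⟩ ≤ m := hle _ (l.get_mem _)
    have h1 : g (l.get ⟨i, by omega⟩) ≤ g (l.get ⟨i+1, by omega⟩) :=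
      hgmono _ _ hab.le hbm
    have h2 : g (l.get ⟨i, by omega⟩) ≤ (1 + ε) * g (l.get ⟨i+1, by omega⟩) := by
      nlinarith [hgnonneg (l.get ⟨i+1, by omega⟩)]
    by_contra hcon
    push_neg at hcon
    exact hc ⟨hcon, h2⟩
  -- inductive lower bound
  have key : ∀ j, 1 ≤ j → (hj : j < l.length) →
      (1:ℝ) ≤ (1 - ε)^(j-1) * g (l.get ⟨j, hj⟩) := by
    intro j
    induction j with
    | zero => omega
    | succ j ih =>
      intro _ hj
      rcases Nat.eq_zero_or_pos j with rfl | hj1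
      · -- base case j+1 = 1
        have hs := hstep 0 (by omega)
        have h1 : 0 < g (l.get ⟨1, hj⟩) := by
          by_contra hcon
          push_neg at hcon
          have := hgnonneg (l.get ⟨0, by omega⟩)
          nlinarith
        have h2 : (1:ℝ) ≤ g (l.get ⟨1, hj⟩) := by
          simp only [hg] at h1 ⊢
          have : 0 < (Finset.univ.filter (fun i => f (l.get ⟨1, hj⟩) i ≠ 0)).card :=
            by exact_mod_cast h1
          exact_mod_cast this
        simpa using h2
      · have hjl : j < l.length := by omega
        have hprev := ih hj1 hjl
        have hs := hstep j (by omega)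
        have hpownn : (0:ℝ) ≤ (1 - ε)^(j-1) := pow_nonneg (by linarith) _
        have : (1:ℝ) ≤ (1 - ε)^(j-1) * ((1 - ε) * g (l.get ⟨j+1, hj⟩)) := by
          calc (1:ℝ) ≤ (1 - ε)^(j-1) * g (l.get ⟨j, hjl⟩) := hprev
            _ ≤ (1 - ε)^(j-1) * ((1 - ε) * g (l.get ⟨j+1, hj⟩)) :=
              mul_le_mul_of_nonneg_left (hs).le hpownn
        calc (1:ℝ) ≤ (1 - ε)^(j-1) * ((1 - ε) * g (l.get ⟨j+1, hj⟩)) := this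
          _ = (1 - ε)^(j-1+1) * g (l.get ⟨j+1, hj⟩) := by ring
          _ = (1 - ε)^(j+1-1) * g (l.get ⟨j+1, hj⟩) := by
              congr 2
              omega
  -- apply at j = length - 1
  set k := l.length with hk
  have hk3 : 3 ≤ k := hlen
  have hfin : (1:ℝ) ≤ (1 - ε)^(k-2) * g (l.get ⟨k-1, by omega⟩) := by
    have := key (k-1) (by omega) (by omega)
    have hkk : k - 1 - 1 = k - 2 := by omega
    rwa [hkk] at this
  have hpowpos : (0:ℝ) < (1 - ε)^(k-2) := pow_pos (by linarith) _
  have hle2 : (1:ℝ) ≤ (1 - ε)^(k-2) * n := by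
    calc (1:ℝ) ≤ (1 - ε)^(k-2) * g (l.get ⟨k-1, by omega⟩) := hfin
      _ ≤ (1 - ε)^(k-2) * n := mul_le_mul_of_nonneg_left (hgle _) hpowpos.le
  have hnpos : (0:ℝ) < n := by nlinarith [pow_le_one₀ (by linarith : (0:ℝ) ≤ 1-ε) (by linarith : (1:ℝ)-ε ≤ 1) (n := k-2)]
  have hlogge : 0 ≤ Real.log ((1 - ε)^(k-2) * n) := Real.log_nonneg hle2
  rw [Real.log_mul hpowpos.ne' hnpos.ne', Real.log_pow] at hlogge
  have hlog1ε : Real.log (1 - ε) ≤ -ε := by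
    have h1 : (1:ℝ) - ε ≤ Real.exp (-ε) := by
      have := Real.add_one_le_exp (-ε)
      linarith
    calc Real.log (1 - ε) ≤ Real.log (Real.exp (-ε)) :=
          Real.log_le_log (by linarith) h1
      _ = -ε := Real.log_exp _
  -- combine
  have hcast : ((k - 2 : ℕ) : ℝ) = (k:ℝ) - 2 := by
    have : 2 ≤ k := by omega
    push_cast [Nat.cast_sub this]
    ring
  have h2 : ((k:ℝ) - 2) * ε ≤ Real.log n := by
    have := mul_le_mul_of_nonneg_left hlog1ε (by positivity : (0:ℝ) ≤ ((k-2:ℕ):ℝ))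
    rw [hcast] at this hlogge
    nlinarith
  have : (k:ℝ) - 2 ≤ Real.log n / ε := by
    rw [le_div_iff₀ hε0]
    linarith
  linarith
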